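/- Let n ≥ 1 be an integer, let Σ ⊂ ℝⁿ be a nonempty compact set, and let d : ℝⁿ → ℝ be the distance function d(y) := dist(y, Σ) = inf_{z∈Σ} ‖y − z‖. Suppose x ∈ ℝⁿ, x ∉ Σ, and d is differentiable at x. Then ‖∇d(x)‖ = 1; moreover, there exists a unique point x̄ ∈ Σ with ‖x − x̄‖ = d(x), and for this point ∇d(x) = (x − x̄)/‖x − x̄‖, where ∇d(x) denotes the gradient of d at x. -/

import Mathlib

open MeasureTheory Metric Set Filter
open scoped ENNReal Topology

noncomputable section

abbrev Eu (n : ℕ) := EuclideanSpace ℝ (Fin n)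

/-- Fractional Laplacian of a (test) function, defined via the Fourier transform:
`(−Δ)^γ φ(x) = ∫ (2π‖ξ‖)^{2γ} 𝓕φ(ξ) e^{2πi⟨x,ξ⟩} dξ`. -/
def fracLap {n : ℕ} (γ : ℝ) (φ : Eu n → ℝ) (x : Eu n) : ℝ :=
  (∫ ξ : Eu n,
      (((2 * Real.pi * ‖ξ‖) ^ (2 * γ) : ℝ) : ℂ) *
        (∫ y : Eu n,
            (φ y : ℂ) * Complex.exp (-(2 * Real.pi * Complex.I) * ((inner ℝ y ξ : ℝ) : ℂ))) *
        Complex.exp (2 * Real.pi * Complex.I * ((inner ℝ x ξ : ℝ) : ℂ))).re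

/-- Membership in the space `L_s(ℝⁿ)`: locally integrable with
`∫ |u(x)|/(1+‖x‖^{n+2s}) dx < ∞`. -/
def memLs (n : ℕ) (s : ℝ) (u : Eu n → ℝ) : Prop :=
  LocallyIntegrable u volume ∧
    Integrable (fun x : Eu n => |u x| / (1 + ‖x‖ ^ ((n : ℝ) + 2 * s))) volume

theorem key (n : ℕ)
    (S : Set (Eu n)) (x : Eu n) (hx : x ∉ S)
    (hd : DifferentiableAt ℝ (fun y : Eu n => infDist y S) x)
    (xb : Eu n) (hxb : xb ∈ S) (hdist : ‖x - xb‖ = infDist x S) :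
    ‖gradient (fun y : Eu n => infDist y S) x‖ = 1 ∧
    gradient (fun y : Eu n => infDist y S) x = ‖x - xb‖⁻¹ • (x - xb) := by
  set d : Eu n → ℝ := fun y => infDist y S with hdset
  set D : ℝ := infDist x S with hDset
  have hxne : x ≠ xb := fun h => hx (h ▸ hxb)
  have hDpos : 0 < D := by
    rw [← hdist, norm_pos_iff]
    exact sub_ne_zero.mpr hxne
  set w : Eu n := xb - x with hw
  have hwnorm : ‖w‖ = D := by rw [hw, ← hdist, norm_sub_rev]
  -- segment equality
  have hseg : ∀ t ∈ Icc (0:ℝ) 1, d (x + t • w) = (1 - t) * D := by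
    intro t ht
    have hub : d (x + t • w) ≤ (1 - t) * D := by
      have h1 : d (x + t • w) ≤ dist (x + t • w) xb := infDist_le_dist_of_mem hxb
      have h2 : dist (x + t • w) xb = (1 - t) * D := by
        rw [dist_eq_norm]
        have : x + t • w - xb = -((1 - t) • w) := by
          rw [hw]; module
        rw [this, norm_neg, norm_smul, Real.norm_eq_abs,
          abs_of_nonneg (by linarith [ht.2]), hwnorm]
      linarith [h2 ▸ h1]
    have hlb : (1 - t) * D ≤ d (x + t • w) := by
      have h1 : D ≤ d (x + t • w) + dist x (x + t • w) := infDist_le_infDist_add_dist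
      have h2 : dist x (x + t • w) = t * D := by
        rw [dist_eq_norm]
        have : x - (x + t • w) = -(t • w) := by module
        rw [this, norm_neg, norm_smul, Real.norm_eq_abs, abs_of_nonneg ht.1, hwnorm]
      linarith
    linarith
  -- derivative along the segment
  have hc : HasDerivAt (fun t : ℝ => x + t • w) w 0 := by
    simpa using ((hasDerivAt_id (0:ℝ)).smul_const w).const_add x
  have hcomp : HasDerivAt (fun t : ℝ => d (x + t • w)) ((fderiv ℝ d x) w) 0 := by
    have hfda : HasFDerivAt d (fderiv ℝ d x) ((fun t : ℝ => x + t • w) 0) := by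
      simpa using hd.hasFDerivAt
    exact hfda.comp_hasDerivAt 0 hc
  have hu : UniqueDiffWithinAt ℝ (Icc (0:ℝ) 1) 0 :=
    (uniqueDiffOn_Icc one_pos) 0 ⟨le_refl 0, zero_le_one⟩
  have h1 : HasDerivWithinAt (fun t : ℝ => (1 - t) * D) ((fderiv ℝ d x) w) (Icc 0 1) 0 := by
    refine (hcomp.hasDerivWithinAt).congr (fun t ht => (hseg t ht).symm) ?_
    simpa using (hseg 0 ⟨le_refl 0, zero_le_one⟩).symm
  have h2 : HasDerivWithinAt (fun t : ℝ => (1 - t) * D) (-D) (Icc 0 1) 0 := by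
    have : HasDerivAt (fun t : ℝ => (1 - t) * D) (-D) 0 := by
      simpa using ((hasDerivAt_id (0:ℝ)).const_sub 1).mul_const D
    exact this.hasDerivWithinAt
  have hfd : (fderiv ℝ d x) w = -D := by
    rw [← h1.derivWithin hu, ← h2.derivWithin hu]
  -- gradient facts
  set g : Eu n := gradient d x with hg
  have hinner : (inner ℝ g w : ℝ) = -D := by
    rw [hg, gradient, InnerProductSpace.toDual_symm_apply, hfd]
  have hgle : ‖g‖ ≤ 1 := by
    have hlip : LipschitzWith 1 d := lipschitz_infDist_pt S
    have := norm_fderiv_le_of_lipschitz ℝ (x₀ := x) hlip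
    calc ‖g‖ = ‖fderiv ℝ d x‖ := by
            rw [hg, gradient]; exact (InnerProductSpace.toDual ℝ (Eu n)).symm.norm_map _
      _ ≤ 1 := by simpa using this
  have hCS : (inner ℝ (-g) w : ℝ) ≤ ‖-g‖ * ‖w‖ := real_inner_le_norm _ _
  have hinner' : (inner ℝ (-g) w : ℝ) = D := by rw [inner_neg_left, hinner]; ring
  have hgn : ‖g‖ = 1 := by
    have h3 : D ≤ ‖g‖ * D := by
      have := hCS
      rw [hinner', norm_neg, hwnorm] at this
      exact this
    have : 1 ≤ ‖g‖ := by
      by_contra h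
      push_neg at h
      nlinarith
    linarith
  have heq : ‖w‖ • (-g) = ‖-g‖ • w := by
    rw [← inner_eq_norm_mul_iff_real, hinner', norm_neg, hgn, hwnorm]; ring
  rw [norm_neg, hgn, hwnorm, one_smul] at heq
  refine ⟨hgn, ?_⟩
  have : g = -(D⁻¹ • w) := by
    rw [← heq, smul_neg, smul_neg, neg_neg, smul_smul, inv_mul_cancel₀ hDpos.ne', one_smul]
  rw [hg] at this ⊢
  rw [this, hdist, hw]
  module

/-- Proposition: at a point of differentiability outside `S`, the distance function
has gradient of norm one, the nearest point is unique, and the gradient points away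
from it. -/
theorem distance_function_gradient
    (n : ℕ) (hn : 1 ≤ n)
    (S : Set (Eu n)) (hSne : S.Nonempty) (hScpt : IsCompact S)
    (x : Eu n) (hx : x ∉ S)
    (hd : DifferentiableAt ℝ (fun y : Eu n => infDist y S) x) :
    ‖gradient (fun y : Eu n => infDist y S) x‖ = 1 ∧
    (∃! xb : Eu n, xb ∈ S ∧ ‖x - xb‖ = infDist x S) ∧
    ∀ xb ∈ S, ‖x - xb‖ = infDist x S →
      gradient (fun y : Eu n => infDist y S) x = ‖x - xb‖⁻¹ • (x - xb) := by
  obtain ⟨xb, hxb, hxbd⟩ := hScpt.exists_infDist_eq_dist hSne x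
  have hdist : ‖x - xb‖ = infDist x S := by rw [hxbd, dist_eq_norm]
  obtain ⟨hgn, hgeq⟩ := key n S x hx hd xb hxb hdist
  have hDpos : 0 < infDist x S := by
    rw [← hdist, norm_pos_iff, sub_ne_zero]
    exact fun h => hx (h ▸ hxb)
  have huniq : ∀ y ∈ S, ‖x - y‖ = infDist x S →
      gradient (fun y : Eu n => infDist y S) x = ‖x - y‖⁻¹ • (x - y) :=
    fun y hy hyd => (key n S x hx hd y hy hyd).2
  refine ⟨hgn, ⟨xb, ⟨hxb, hdist⟩, ?_⟩, huniq⟩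
  rintro y ⟨hy, hyd⟩
  have h1 := huniq y hy hyd
  have h2 := huniq xb hxb hdist
  rw [hyd] at h1
  rw [hdist] at h2
  have : (infDist x S)⁻¹ • (x - y) = (infDist x S)⁻¹ • (x - xb) := by rw [← h1, ← h2]
  have := smul_right_injective (Eu n) (inv_ne_zero hDpos.ne') this
  have hxy : x - y = x - xb := this
  exact sub_right_injective hxy
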